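/- The remainder of the tensor-product Bernstein cubature formula satisfies, for $F \in C^{2,2}([0,1]^2)$: $|R_{n_1,n_2}[F]| \le \frac{1}{4}\left(\frac{1}{n_1}\|F^{(2,0)}\|_\infty + \frac{1}{n_2}\|F^{(0,2)}\|_\infty\right)$. -/

import Mathlib

open Finset Set intervalIntegral

/-- Beta integral for natural exponents. -/
lemma betaNat : ∀ (m k : ℕ), ∫ x in (0:ℝ)..1, x^k * (1-x)^m
    = 1 / (((k:ℝ)+m+1) * ((k+m).choose k)) := by
  intro m
  induction m with
  | zero =>
    intro k
    simp [integral_pow]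
  | succ m ih =>
    intro k
    have hderiv : ∀ x : ℝ, HasDerivAt (fun t : ℝ => t^(k+1) * (1-t)^(m+1))
        (((k:ℝ)+1) * (x^k * (1-x)^(m+1)) - ((m:ℝ)+1) * (x^(k+1) * (1-x)^m)) x := by
      intro x
      have h1 : HasDerivAt (fun t : ℝ => t^(k+1)) (((k:ℝ)+1) * x^k) x := by
        simpa using (hasDerivAt_pow (k+1) x)
      have h2 : HasDerivAt (fun t : ℝ => (1-t)^(m+1)) (-(((m:ℝ)+1) * (1-x)^m)) x := by
        have := ((hasDerivAt_pow (m+1) (1-x)).comp x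
          ((hasDerivAt_id x).const_sub 1))
        simpa [Function.comp_def] using this
      have := h1.mul h2
      refine this.congr_deriv ?_
      push_cast
      ring
    have i1 : IntervalIntegrable (fun x : ℝ => x^k * (1-x)^(m+1)) MeasureTheory.volume 0 1 := by
      apply Continuous.intervalIntegrable; continuity
    have i2 : IntervalIntegrable (fun x : ℝ => x^(k+1) * (1-x)^m) MeasureTheory.volume 0 1 := by
      apply Continuous.intervalIntegrable; continuity
    have hint := integral_eq_sub_of_hasDerivAt (a := (0:ℝ)) (b := 1)
        (f := fun t : ℝ => t^(k+1) * (1-t)^(m+1))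
        (f' := fun x : ℝ => ((k:ℝ)+1) * (x^k * (1-x)^(m+1)) - ((m:ℝ)+1) * (x^(k+1) * (1-x)^m))
        (fun x _ => hderiv x)
        (((i1.const_mul _).sub (i2.const_mul _)))
    simp only [one_pow, zero_pow, sub_zero, sub_self] at hint
    rw [intervalIntegral.integral_sub (i1.const_mul _) (i2.const_mul _),
      intervalIntegral.integral_const_mul, intervalIntegral.integral_const_mul, ih] at hint
    have hk1 : ((k:ℝ)+1) ≠ 0 := by positivity
    have hC1pos' : 0 < (k+m+1).choose k := Nat.choose_pos (by omega)
    have hC2pos' : 0 < (k+1+m).choose (k+1) := Nat.choose_pos (by omega)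
    have hC1pos : (0:ℝ) < ((k+m+1).choose k : ℝ) := by exact_mod_cast hC1pos'
    have hC2pos : (0:ℝ) < ((k+1+m).choose (k+1) : ℝ) := by exact_mod_cast hC2pos'
    have hcc : (((k+1+m).choose (k+1) : ℝ)) * ((k:ℝ)+1) = (((k+m+1).choose k : ℝ)) * ((m:ℝ)+1) := by
      have h := Nat.choose_succ_right_eq (k+m+1) k
      have h2 : k+m+1-k = m+1 := by omega
      rw [h2] at h
      have h3 : k+1+m = k+m+1 := by omega
      rw [h3]
      exact_mod_cast h
    have hrw : (k:ℝ) + ((m:ℕ)+1 : ℕ) + 1 = (k:ℝ)+m+2 := by push_cast; ring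
    have hch : (k + (m+1)).choose k = (k+m+1).choose k := by rw [show k+(m+1)=k+m+1 from by omega]
    rw [hch]
    push_cast at hint ⊢
    field_simp at hint ⊢
    have hm1 : ((m:ℝ)+1) ≠ 0 := by positivity
    have hgoal : (∫ x in (0:ℝ)..1, x^k * (1-x)^(m+1)) * (((k:ℝ)+m+2) * ((k+m+1).choose k : ℝ)) * ((m:ℝ)+1)
        = 1 * ((m:ℝ)+1) := by
      linear_combination hint - (∫ x in (0:ℝ)..1, x^k * (1-x)^(m+1)) * (((k:ℝ)+m+2)) * hcc
    have h2 := mul_right_cancel₀ hm1 hgoal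
    linear_combination h2

/-- Real Bernstein basis. -/
noncomputable def bb (n k : ℕ) (x : ℝ) : ℝ := (n.choose k : ℝ) * x^k * (1-x)^(n-k)

lemma bb_eval (n k : ℕ) (x : ℝ) : (bernsteinPolynomial ℝ n k).eval x = bb n k x := by
  simp [bernsteinPolynomial, bb]

lemma bb_nonneg {n k : ℕ} {x : ℝ} (hx : x ∈ Set.Icc (0:ℝ) 1) : 0 ≤ bb n k x := by
  obtain ⟨h0, h1⟩ := hx
  have h2 : (0:ℝ) ≤ 1 - x := by linarith
  exact mul_nonneg (mul_nonneg (by positivity) (pow_nonneg h0 _)) (pow_nonneg h2 _)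

lemma bb_sum (n : ℕ) (x : ℝ) : ∑ k ∈ Finset.range (n+1), bb n k x = 1 := by
  have := congrArg (Polynomial.eval x) (bernsteinPolynomial.sum ℝ n)
  simpa [Polynomial.eval_finset_sum, bb_eval] using this

lemma bb_sum_smul (n : ℕ) (x : ℝ) :
    ∑ k ∈ Finset.range (n+1), (k : ℝ) * bb n k x = n * x := by
  have := congrArg (Polynomial.eval x) (bernsteinPolynomial.sum_smul ℝ n)
  simpa [Polynomial.eval_finset_sum, bb_eval, mul_comm] using this

lemma bb_variance (n : ℕ) (x : ℝ) :
    ∑ k ∈ Finset.range (n+1), ((n:ℝ) * x - k)^2 * bb n k x = n * x * (1 - x) := by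
  have := congrArg (Polynomial.eval x) (bernsteinPolynomial.variance ℝ n)
  simpa [Polynomial.eval_finset_sum, bb_eval] using this

lemma bb_variance' {n : ℕ} (hn : 0 < n) (x : ℝ) :
    ∑ k ∈ Finset.range (n+1), (x - (k:ℝ)/n)^2 * bb n k x = x * (1-x) / n := by
  have hn' : (n:ℝ) ≠ 0 := Nat.cast_ne_zero.mpr hn.ne'
  have h := bb_variance n x
  have : ∀ k : ℕ, (x - (k:ℝ)/n)^2 * bb n k x = (1/(n:ℝ)^2) * (((n:ℝ)*x - k)^2 * bb n k x) := by
    intro k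
    rw [show x - (k:ℝ)/n = ((n:ℝ)*x - k)/n by field_simp, div_pow]
    field_simp
  rw [Finset.sum_congr rfl (fun k _ => this k), ← Finset.mul_sum, h]
  field_simp

lemma bb_first_moment {n : ℕ} (hn : 0 < n) (x : ℝ) :
    ∑ k ∈ Finset.range (n+1), ((k:ℝ)/n - x) * bb n k x = 0 := by
  have hn' : (n:ℝ) ≠ 0 := Nat.cast_ne_zero.mpr hn.ne'
  have h1 := bb_sum_smul n x
  have h0 := bb_sum n x
  have : ∀ k : ℕ, ((k:ℝ)/n - x) * bb n k x
      = (1/(n:ℝ)) * ((k:ℝ) * bb n k x) - x * bb n k x := by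
    intro k; field_simp
  rw [Finset.sum_congr rfl (fun k _ => this k), Finset.sum_sub_distrib, ← Finset.mul_sum,
    ← Finset.mul_sum, h1, h0]
  field_simp
  simp

lemma bb_integral {n k : ℕ} (hk : k ≤ n) :
    ∫ x in (0:ℝ)..1, bb n k x = 1 / ((n:ℝ)+1) := by
  have h := betaNat (n - k) k
  have h2 : k + (n - k) = n := by omega
  rw [h2] at h
  have hc : (0:ℝ) < (n.choose k : ℝ) := by exact_mod_cast Nat.choose_pos hk
  calc ∫ x in (0:ℝ)..1, bb n k x
      = (n.choose k : ℝ) * ∫ x in (0:ℝ)..1, x^k * (1-x)^(n-k) := by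
        rw [← intervalIntegral.integral_const_mul]
        simp [bb, mul_assoc]
    _ = 1 / ((n:ℝ)+1) := by
        rw [h]
        field_simp
        rw [Nat.cast_sub hk]; ring

lemma taylor1 {f f' f'' : ℝ → ℝ}
    (hf : ∀ t ∈ Set.Icc (0:ℝ) 1, HasDerivWithinAt f (f' t) (Set.Icc (0:ℝ) 1) t)
    (hf' : ∀ t ∈ Set.Icc (0:ℝ) 1, HasDerivWithinAt f' (f'' t) (Set.Icc (0:ℝ) 1) t)
    {M : ℝ} (hM : ∀ t ∈ Set.Icc (0:ℝ) 1, |f'' t| ≤ M)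
    {x a : ℝ} (hx : x ∈ Set.Icc (0:ℝ) 1) (ha : a ∈ Set.Icc (0:ℝ) 1) :
    |f a - f x - f' x * (a - x)| ≤ M * (a - x)^2 := by
  have hM0 : 0 ≤ M := le_trans (abs_nonneg _) (hM 0 (by norm_num))
  -- step 1: Lipschitz-type bound on f'
  have hstep1 : ∀ t ∈ Set.Icc (0:ℝ) 1, |f' t - f' x| ≤ M * |t - x| := by
    intro t ht
    have := (convex_Icc (0:ℝ) 1).norm_image_sub_le_of_norm_hasDerivWithin_le
      hf' (fun u hu => by simpa using hM u hu) hx ht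
    simpa [Real.norm_eq_abs] using this
  -- step 2: on uIcc x a
  set s : Set ℝ := Set.uIcc x a with hs
  have hsub : s ⊆ Set.Icc (0:ℝ) 1 := Set.uIcc_subset_Icc hx ha
  have hg : ∀ t ∈ s, HasDerivWithinAt (fun u => f u - f' x * u) (f' t - f' x) s t := by
    intro t ht
    exact (((hf t (hsub ht)).sub ((hasDerivWithinAt_id t _).const_mul (f' x))).mono hsub).congr_deriv
      (by ring)
  have hbound : ∀ t ∈ s, ‖f' t - f' x‖ ≤ M * |a - x| := by
    intro t ht
    have h1 : |t - x| ≤ |a - x| := by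
      rcases le_total x a with hle | hle
      · rw [hs, Set.uIcc_of_le hle] at ht
        rw [abs_of_nonneg (by linarith [ht.1]), abs_of_nonneg (by linarith)]
        linarith [ht.2]
      · rw [hs, Set.uIcc_of_ge hle] at ht
        rw [abs_of_nonpos (by linarith [ht.2]), abs_of_nonpos (by linarith)]
        linarith [ht.1]
    calc ‖f' t - f' x‖ = |f' t - f' x| := rfl
      _ ≤ M * |t - x| := hstep1 t (hsub ht)
      _ ≤ M * |a - x| := by exact mul_le_mul_of_nonneg_left h1 hM0
  have hconv : Convex ℝ s := convex_uIcc x a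
  have := hconv.norm_image_sub_le_of_norm_hasDerivWithin_le hg hbound
    (Set.left_mem_uIcc) (Set.right_mem_uIcc)
  have h2 : |(f a - f' x * a) - (f x - f' x * x)| ≤ M * |a - x| * |a - x| := by
    simpa [Real.norm_eq_abs] using this
  calc |f a - f x - f' x * (a - x)| = |(f a - f' x * a) - (f x - f' x * x)| := by ring_nf
    _ ≤ M * |a - x| * |a - x| := h2
    _ = M * (a - x)^2 := by rw [mul_assoc, abs_mul_abs_self]; ring

lemma bern_approx {n : ℕ} (hn : 0 < n) {f f' f'' : ℝ → ℝ}
    (hf : ∀ t ∈ Set.Icc (0:ℝ) 1, HasDerivWithinAt f (f' t) (Set.Icc (0:ℝ) 1) t)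
    (hf' : ∀ t ∈ Set.Icc (0:ℝ) 1, HasDerivWithinAt f' (f'' t) (Set.Icc (0:ℝ) 1) t)
    {M : ℝ} (hM : ∀ t ∈ Set.Icc (0:ℝ) 1, |f'' t| ≤ M)
    {x : ℝ} (hx : x ∈ Set.Icc (0:ℝ) 1) :
    |f x - ∑ k ∈ Finset.range (n+1), f ((k:ℝ)/n) * bb n k x| ≤ M / (4*n) := by
  have hM0 : 0 ≤ M := le_trans (abs_nonneg _) (hM 0 (by norm_num))
  have hn' : (0:ℝ) < n := by exact_mod_cast hn
  have key : f x - ∑ k ∈ Finset.range (n+1), f ((k:ℝ)/n) * bb n k x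
      = ∑ k ∈ Finset.range (n+1), (f x + f' x * ((k:ℝ)/n - x) - f ((k:ℝ)/n)) * bb n k x := by
    have e : ∀ k ∈ Finset.range (n+1), (f x + f' x * ((k:ℝ)/n - x) - f ((k:ℝ)/n)) * bb n k x
        = f x * bb n k x + f' x * (((k:ℝ)/n - x) * bb n k x) - f ((k:ℝ)/n) * bb n k x := by
      intro k _; ring
    rw [Finset.sum_congr rfl e, Finset.sum_sub_distrib, Finset.sum_add_distrib,
      ← Finset.mul_sum, ← Finset.mul_sum, bb_sum, bb_first_moment hn]
    ring
  rw [key]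
  calc |∑ k ∈ Finset.range (n+1), (f x + f' x * ((k:ℝ)/n - x) - f ((k:ℝ)/n)) * bb n k x|
      ≤ ∑ k ∈ Finset.range (n+1), |(f x + f' x * ((k:ℝ)/n - x) - f ((k:ℝ)/n)) * bb n k x| :=
        Finset.abs_sum_le_sum_abs _ _
    _ ≤ ∑ k ∈ Finset.range (n+1), M * (x - (k:ℝ)/n)^2 * bb n k x := by
        apply Finset.sum_le_sum
        intro k hk
        rw [abs_mul, abs_of_nonneg (bb_nonneg hx)]
        apply mul_le_mul_of_nonneg_right _ (bb_nonneg hx)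
        have hkn : (k:ℝ)/n ∈ Set.Icc (0:ℝ) 1 := by
          constructor
          · positivity
          · rw [div_le_one hn']
            exact_mod_cast Nat.lt_succ_iff.mp (Finset.mem_range.mp hk)
        have := taylor1 hf hf' hM hx hkn
        calc |f x + f' x * ((k:ℝ)/n - x) - f ((k:ℝ)/n)|
            = |f ((k:ℝ)/n) - f x - f' x * ((k:ℝ)/n - x)| := by rw [← abs_neg]; ring_nf
          _ ≤ M * ((k:ℝ)/n - x)^2 := this
          _ = M * (x - (k:ℝ)/n)^2 := by ring
    _ = M * (x * (1-x) / n) := by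
        have e2 : ∀ k ∈ Finset.range (n+1), M * (x - (k:ℝ)/n)^2 * bb n k x
            = M * ((x - (k:ℝ)/n)^2 * bb n k x) := fun k _ => by ring
        rw [Finset.sum_congr rfl e2, ← Finset.mul_sum, bb_variance' hn]
    _ ≤ M / (4*n) := by
        have h14 : x * (1-x) / (n:ℝ) ≤ 1/(4*n) := by
          rw [div_le_div_iff₀ hn' (by positivity)]
          nlinarith [sq_nonneg (2*x-1), hn']
        calc M * (x * (1-x) / n) ≤ M * (1/(4*n)) := mul_le_mul_of_nonneg_left h14 hM0
          _ = M / (4*n) := by ring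

lemma bb_cont (n k : ℕ) : Continuous (bb n k) := by
  unfold bb; continuity

lemma ciSup_bound (g : ℝ → ℝ → ℝ)
    (hg : ContinuousOn (fun p : ℝ × ℝ => g p.1 p.2) (Set.Icc (0:ℝ) 1 ×ˢ Set.Icc (0:ℝ) 1))
    {x y : ℝ} (hx : x ∈ Set.Icc (0:ℝ) 1) (hy : y ∈ Set.Icc (0:ℝ) 1) :
    |g x y| ≤ ⨆ p : (Set.Icc (0:ℝ) 1 ×ˢ Set.Icc (0:ℝ) 1 : Set (ℝ × ℝ)),
      |g (p : ℝ × ℝ).1 (p : ℝ × ℝ).2| := by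
  obtain ⟨Cb, hCb⟩ := (isCompact_Icc.prod isCompact_Icc).exists_bound_of_continuousOn hg
  have hbdd : BddAbove (Set.range fun p : (Set.Icc (0:ℝ) 1 ×ˢ Set.Icc (0:ℝ) 1 : Set (ℝ × ℝ)) =>
      |g (p : ℝ × ℝ).1 (p : ℝ × ℝ).2|) := by
    refine ⟨Cb, ?_⟩
    rintro _ ⟨p, rfl⟩
    simpa [Real.norm_eq_abs] using hCb p p.2
  exact le_ciSup hbdd (⟨(x, y), Set.mem_prod.mpr ⟨hx, hy⟩⟩ :
    (Set.Icc (0:ℝ) 1 ×ˢ Set.Icc (0:ℝ) 1 : Set (ℝ × ℝ)))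

/-- two-term remainder bound for the tensor-product Bernstein cubature
formula, for `F ∈ C^{2,2}([0,1]²)`. -/
theorem stmt6 (n₁ n₂ : ℕ) (hn₁ : 0 < n₁) (hn₂ : 0 < n₂)
    (F Fx Fxx Fy Fyy : ℝ → ℝ → ℝ)
    (hFc : ContinuousOn (fun p : ℝ × ℝ => F p.1 p.2)
      (Set.Icc (0:ℝ) 1 ×ˢ Set.Icc (0:ℝ) 1))
    (hFx : ∀ y ∈ Set.Icc (0:ℝ) 1, ∀ x ∈ Set.Icc (0:ℝ) 1,
      HasDerivWithinAt (fun t => F t y) (Fx x y) (Set.Icc (0:ℝ) 1) x)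
    (hFxx : ∀ y ∈ Set.Icc (0:ℝ) 1, ∀ x ∈ Set.Icc (0:ℝ) 1,
      HasDerivWithinAt (fun t => Fx t y) (Fxx x y) (Set.Icc (0:ℝ) 1) x)
    (hFy : ∀ x ∈ Set.Icc (0:ℝ) 1, ∀ y ∈ Set.Icc (0:ℝ) 1,
      HasDerivWithinAt (fun t => F x t) (Fy x y) (Set.Icc (0:ℝ) 1) y)
    (hFyy : ∀ x ∈ Set.Icc (0:ℝ) 1, ∀ y ∈ Set.Icc (0:ℝ) 1,
      HasDerivWithinAt (fun t => Fy x t) (Fyy x y) (Set.Icc (0:ℝ) 1) y)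
    (hFxxc : ContinuousOn (fun p : ℝ × ℝ => Fxx p.1 p.2)
      (Set.Icc (0:ℝ) 1 ×ˢ Set.Icc (0:ℝ) 1))
    (hFyyc : ContinuousOn (fun p : ℝ × ℝ => Fyy p.1 p.2)
      (Set.Icc (0:ℝ) 1 ×ˢ Set.Icc (0:ℝ) 1)) :
    |(∫ x in (0:ℝ)..1, ∫ y in (0:ℝ)..1, F x y) -
        (1 / (((n₁ : ℝ) + 1) * ((n₂ : ℝ) + 1))) *
          ∑ i ∈ Finset.range (n₁ + 1), ∑ j ∈ Finset.range (n₂ + 1),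
            F ((i : ℝ) / n₁) ((j : ℝ) / n₂)| ≤
      (1 / 4) * ((1 / (n₁ : ℝ)) * (⨆ p : (Set.Icc (0:ℝ) 1 ×ˢ Set.Icc (0:ℝ) 1 : Set (ℝ × ℝ)),
          |Fxx (p : ℝ × ℝ).1 (p : ℝ × ℝ).2|) +
        (1 / (n₂ : ℝ)) * (⨆ p : (Set.Icc (0:ℝ) 1 ×ˢ Set.Icc (0:ℝ) 1 : Set (ℝ × ℝ)),
          |Fyy (p : ℝ × ℝ).1 (p : ℝ × ℝ).2|)) := by
  set M₁ : ℝ := ⨆ p : (Set.Icc (0:ℝ) 1 ×ˢ Set.Icc (0:ℝ) 1 : Set (ℝ × ℝ)),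
    |Fxx (p : ℝ × ℝ).1 (p : ℝ × ℝ).2| with hM₁def
  set M₂ : ℝ := ⨆ p : (Set.Icc (0:ℝ) 1 ×ˢ Set.Icc (0:ℝ) 1 : Set (ℝ × ℝ)),
    |Fyy (p : ℝ × ℝ).1 (p : ℝ × ℝ).2| with hM₂def
  have hM₁ : ∀ x ∈ Set.Icc (0:ℝ) 1, ∀ y ∈ Set.Icc (0:ℝ) 1, |Fxx x y| ≤ M₁ :=
    fun x hx y hy => ciSup_bound Fxx hFxxc hx hy
  have hM₂ : ∀ x ∈ Set.Icc (0:ℝ) 1, ∀ y ∈ Set.Icc (0:ℝ) 1, |Fyy x y| ≤ M₂ :=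
    fun x hx y hy => ciSup_bound Fyy hFyyc hx hy
  set C : ℝ := M₁ / (4 * n₁) + M₂ / (4 * n₂) with hCdef
  have hn₁' : (0:ℝ) < n₁ := by exact_mod_cast hn₁
  have hn₂' : (0:ℝ) < n₂ := by exact_mod_cast hn₂
  -- the tensor Bernstein polynomial
  set G : ℝ → ℝ → ℝ := fun x y => ∑ j ∈ Finset.range (n₂+1),
    (∑ i ∈ Finset.range (n₁+1), F ((i:ℝ)/n₁) ((j:ℝ)/n₂) * bb n₁ i x) * bb n₂ j y with hGdef
  -- slice continuity of F
  have hFslice : ∀ x ∈ Set.Icc (0:ℝ) 1, ContinuousOn (fun y => F x y) (Set.Icc (0:ℝ) 1) := by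
    intro x hx
    have : ContinuousOn (fun y : ℝ => ((x, y) : ℝ × ℝ)) (Set.Icc (0:ℝ) 1) :=
      (continuous_const.prodMk continuous_id).continuousOn
    exact hFc.comp this (fun y hy => Set.mem_prod.mpr ⟨hx, hy⟩)
  have hFslice' : ∀ y ∈ Set.Icc (0:ℝ) 1, ContinuousOn (fun x => F x y) (Set.Icc (0:ℝ) 1) := by
    intro y hy
    have : ContinuousOn (fun x : ℝ => ((x, y) : ℝ × ℝ)) (Set.Icc (0:ℝ) 1) :=
      (continuous_id.prodMk continuous_const).continuousOn
    exact hFc.comp this (fun x hx => Set.mem_prod.mpr ⟨hx, hy⟩)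
  -- pointwise estimate
  have hpt : ∀ x ∈ Set.Icc (0:ℝ) 1, ∀ y ∈ Set.Icc (0:ℝ) 1, |F x y - G x y| ≤ C := by
    intro x hx y hy
    -- inner approximation in y
    have t1 : |F x y - ∑ j ∈ Finset.range (n₂+1), F x ((j:ℝ)/n₂) * bb n₂ j y| ≤ M₂ / (4*n₂) :=
      bern_approx hn₂ (hFy x hx) (hFyy x hx) (fun t ht => hM₂ x hx t ht) hy
    have t2 : ∀ j ∈ Finset.range (n₂+1),
        |F x ((j:ℝ)/n₂) - ∑ i ∈ Finset.range (n₁+1), F ((i:ℝ)/n₁) ((j:ℝ)/n₂) * bb n₁ i x|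
          ≤ M₁ / (4*n₁) := by
      intro j hj
      have hjn : (j:ℝ)/n₂ ∈ Set.Icc (0:ℝ) 1 := by
        constructor
        · positivity
        · rw [div_le_one hn₂']
          exact_mod_cast Nat.lt_succ_iff.mp (Finset.mem_range.mp hj)
      exact bern_approx hn₁ (hFx _ hjn) (hFxx _ hjn)
        (fun t ht => hM₁ t ht _ hjn) hx
    have hsplit : F x y - G x y
        = (F x y - ∑ j ∈ Finset.range (n₂+1), F x ((j:ℝ)/n₂) * bb n₂ j y)
          + ∑ j ∈ Finset.range (n₂+1),
            (F x ((j:ℝ)/n₂) - ∑ i ∈ Finset.range (n₁+1), F ((i:ℝ)/n₁) ((j:ℝ)/n₂) * bb n₁ i x)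
              * bb n₂ j y := by
      rw [hGdef]
      simp only [sub_mul, Finset.sum_sub_distrib]
      ring
    rw [hsplit]
    have habs2 : |∑ j ∈ Finset.range (n₂+1),
        (F x ((j:ℝ)/n₂) - ∑ i ∈ Finset.range (n₁+1), F ((i:ℝ)/n₁) ((j:ℝ)/n₂) * bb n₁ i x)
          * bb n₂ j y| ≤ M₁ / (4*n₁) := by
      calc |∑ j ∈ Finset.range (n₂+1), _| ≤ ∑ j ∈ Finset.range (n₂+1),
          |(F x ((j:ℝ)/n₂) - ∑ i ∈ Finset.range (n₁+1), F ((i:ℝ)/n₁) ((j:ℝ)/n₂) * bb n₁ i x)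
            * bb n₂ j y| := Finset.abs_sum_le_sum_abs _ _
        _ ≤ ∑ j ∈ Finset.range (n₂+1), M₁ / (4*n₁) * bb n₂ j y := by
            apply Finset.sum_le_sum
            intro j hj
            rw [abs_mul, abs_of_nonneg (bb_nonneg hy)]
            exact mul_le_mul_of_nonneg_right (t2 j hj) (bb_nonneg hy)
        _ = M₁ / (4*n₁) := by rw [← Finset.mul_sum, bb_sum, mul_one]
    calc |_ + _| ≤ |F x y - ∑ j ∈ Finset.range (n₂+1), F x ((j:ℝ)/n₂) * bb n₂ j y|
          + |∑ j ∈ Finset.range (n₂+1),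
            (F x ((j:ℝ)/n₂) - ∑ i ∈ Finset.range (n₁+1), F ((i:ℝ)/n₁) ((j:ℝ)/n₂) * bb n₁ i x)
              * bb n₂ j y| := abs_add_le _ _
      _ ≤ M₂ / (4*n₂) + M₁ / (4*n₁) := add_le_add t1 habs2
      _ = C := by rw [hCdef]; ring
  -- subset facts
  have hIoc : Set.uIoc (0:ℝ) 1 ⊆ Set.Icc 0 1 := by
    rw [Set.uIoc_of_le (by norm_num : (0:ℝ) ≤ 1)]
    exact Set.Ioc_subset_Icc_self
  have hIccEq : Set.uIcc (0:ℝ) 1 = Set.Icc 0 1 := Set.uIcc_of_le (by norm_num)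
  -- integral of G in y
  have hGyint : ∀ x : ℝ, (∫ y in (0:ℝ)..1, G x y)
      = ∑ j ∈ Finset.range (n₂+1),
        (∑ i ∈ Finset.range (n₁+1), F ((i:ℝ)/n₁) ((j:ℝ)/n₂) * bb n₁ i x) * (1/((n₂:ℝ)+1)) := by
    intro x
    rw [hGdef]
    rw [intervalIntegral.integral_finset_sum]
    · refine Finset.sum_congr rfl fun j hj => ?_
      rw [intervalIntegral.integral_const_mul,
        bb_integral (Nat.lt_succ_iff.mp (Finset.mem_range.mp hj))]
    · intro j _
      exact (continuous_const.mul (bb_cont n₂ j)).intervalIntegrable _ _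
  have h2cont : Continuous (fun x => ∑ j ∈ Finset.range (n₂+1),
      (∑ i ∈ Finset.range (n₁+1), F ((i:ℝ)/n₁) ((j:ℝ)/n₂) * bb n₁ i x) * (1/((n₂:ℝ)+1))) := by
    apply continuous_finset_sum
    intro j _
    exact (continuous_finset_sum _ fun i _ => continuous_const.mul (bb_cont n₁ i)).mul continuous_const
  have hGfun : (fun x => ∫ y in (0:ℝ)..1, G x y) = (fun x => ∑ j ∈ Finset.range (n₂+1),
      (∑ i ∈ Finset.range (n₁+1), F ((i:ℝ)/n₁) ((j:ℝ)/n₂) * bb n₁ i x) * (1/((n₂:ℝ)+1))) :=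
    funext hGyint
  have hiG : IntervalIntegrable (fun x => ∫ y in (0:ℝ)..1, G x y) MeasureTheory.volume 0 1 := by
    rw [hGfun]; exact h2cont.intervalIntegrable _ _
  -- total integral of G
  have hS : (∫ x in (0:ℝ)..1, ∫ y in (0:ℝ)..1, G x y)
      = (1 / (((n₁ : ℝ) + 1) * ((n₂ : ℝ) + 1))) *
          ∑ i ∈ Finset.range (n₁ + 1), ∑ j ∈ Finset.range (n₂ + 1),
            F ((i : ℝ) / n₁) ((j : ℝ) / n₂) := by
    have e1 : (∫ x in (0:ℝ)..1, ∫ y in (0:ℝ)..1, G x y)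
        = ∑ j ∈ Finset.range (n₂+1),
          (∑ i ∈ Finset.range (n₁+1), F ((i:ℝ)/n₁) ((j:ℝ)/n₂) * (1/((n₁:ℝ)+1)))
            * (1/((n₂:ℝ)+1)) := by
      rw [hGfun]
      rw [intervalIntegral.integral_finset_sum]
      · refine Finset.sum_congr rfl fun j _ => ?_
        rw [intervalIntegral.integral_mul_const, intervalIntegral.integral_finset_sum]
        · congr 1
          refine Finset.sum_congr rfl fun i hi => ?_
          rw [intervalIntegral.integral_const_mul,
            bb_integral (Nat.lt_succ_iff.mp (Finset.mem_range.mp hi))]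
        · intro i _
          exact (continuous_const.mul (bb_cont n₁ i)).intervalIntegrable _ _
      · intro j _
        exact ((continuous_finset_sum _ fun i _ =>
          continuous_const.mul (bb_cont n₁ i)).mul continuous_const).intervalIntegrable _ _
    rw [e1, Finset.sum_comm, Finset.mul_sum]
    refine Finset.sum_congr rfl fun i _ => ?_
    rw [Finset.sum_mul, Finset.mul_sum]
    refine Finset.sum_congr rfl fun j _ => ?_
    field_simp
  -- continuity of the outer integral of F
  obtain ⟨C₀, hC₀⟩ := (isCompact_Icc.prod isCompact_Icc).exists_bound_of_continuousOn hFc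
  have h1cont : ContinuousOn (fun x => ∫ y in (0:ℝ)..1, F x y) (Set.Icc 0 1) := by
    intro x₀ hx₀
    apply intervalIntegral.continuousWithinAt_of_dominated_interval (bound := fun _ => C₀)
    · filter_upwards [self_mem_nhdsWithin] with x hx
      exact ((hFslice x hx).mono hIoc).aestronglyMeasurable measurableSet_uIoc
    · filter_upwards [self_mem_nhdsWithin] with x hx
      filter_upwards with y
      intro hy
      exact hC₀ (x, y) (Set.mem_prod.mpr ⟨hx, hIoc hy⟩)
    · exact intervalIntegrable_const
    · filter_upwards with y
      intro hy
      exact (hFslice' y (hIoc hy)) x₀ hx₀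
  have ih1 : IntervalIntegrable (fun x => ∫ y in (0:ℝ)..1, F x y) MeasureTheory.volume 0 1 := by
    apply ContinuousOn.intervalIntegrable
    rwa [hIccEq]
  -- inner difference bound
  have hinner : ∀ x ∈ Set.Icc (0:ℝ) 1,
      |(∫ y in (0:ℝ)..1, F x y) - ∫ y in (0:ℝ)..1, G x y| ≤ C := by
    intro x hx
    have hiF : IntervalIntegrable (fun y => F x y) MeasureTheory.volume 0 1 := by
      apply ContinuousOn.intervalIntegrable
      rw [hIccEq]; exact hFslice x hx
    have hiGy : IntervalIntegrable (fun y => G x y) MeasureTheory.volume 0 1 := by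
      exact (continuous_finset_sum _ fun j _ =>
        continuous_const.mul (bb_cont n₂ j)).intervalIntegrable _ _
    rw [← intervalIntegral.integral_sub hiF hiGy]
    have := intervalIntegral.norm_integral_le_of_norm_le_const (C := C)
      (f := fun y => F x y - G x y) (a := 0) (b := 1)
      (fun y hy => by simpa [Real.norm_eq_abs] using hpt x hx y (hIoc hy))
    simpa [Real.norm_eq_abs] using this
  -- final chain
  have hfinal : |(∫ x in (0:ℝ)..1, ∫ y in (0:ℝ)..1, F x y)
      - ∫ x in (0:ℝ)..1, ∫ y in (0:ℝ)..1, G x y| ≤ C := by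
    rw [← intervalIntegral.integral_sub ih1 hiG]
    have := intervalIntegral.norm_integral_le_of_norm_le_const (C := C) (a := (0:ℝ)) (b := 1)
      (f := fun x => (∫ y in (0:ℝ)..1, F x y) - ∫ y in (0:ℝ)..1, G x y)
      (fun x hx => by simpa [Real.norm_eq_abs] using hinner x (hIoc hx))
    simpa [Real.norm_eq_abs] using this
  rw [← hS]
  calc |(∫ x in (0:ℝ)..1, ∫ y in (0:ℝ)..1, F x y)
      - ∫ x in (0:ℝ)..1, ∫ y in (0:ℝ)..1, G x y| ≤ C := hfinal
    _ = (1/4) * ((1/(n₁:ℝ)) * M₁ + (1/(n₂:ℝ)) * M₂) := by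
        rw [hCdef]; field_simp
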